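/- Let A be symmetric positive definite with smallest eigenvalue λ_min and largest eigenvalue λ_max, D symmetric, X the solution of AX+XA=D, and X(τ)=∫_0^τ e^{-tA}De^{-tA}dt. Then for any τ>0 and any unitarily invariant norm ‖·‖, e^{-2τλ_max} ‖X‖ ≤ ‖X − X(τ)‖ ≤ e^{-2τλ_min} ‖X‖ (assuming X ≠ 0 for the lower bound stated with X nonzero; the upper bound ‖X−X(τ)‖ ≤ e^{-2τλ_min}‖X‖ holds unconditionally). -/

import Mathlib

open MeasureTheory

/-- The spectral (ℓ²-operator) norm of a real matrix. -/
noncomputable def l2Norm {n : ℕ} (M : Matrix (Fin n) (Fin n) ℝ) : ℝ :=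
  ‖Matrix.toEuclideanCLM (𝕜 := ℝ) M‖

section Helpers
open Matrix

section Scoped
open scoped Matrix.Norms.L2Operator

lemma l2Norm_eq {n : ℕ} (M : Matrix (Fin n) (Fin n) ℝ) : l2Norm M = ‖M‖ := rfl

lemma l2Norm_nonneg {n : ℕ} (M : Matrix (Fin n) (Fin n) ℝ) : 0 ≤ l2Norm M :=
  norm_nonneg (E := Matrix (Fin n) (Fin n) ℝ) M

lemma l2Norm_mul_le {n : ℕ} (M N : Matrix (Fin n) (Fin n) ℝ) :
    l2Norm (M * N) ≤ l2Norm M * l2Norm N := by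
  simpa only [l2Norm_eq] using norm_mul_le M N

lemma l2Norm_conj_unitary {n : ℕ} {U : Matrix (Fin n) (Fin n) ℝ}
    (hU : U ∈ unitary (Matrix (Fin n) (Fin n) ℝ)) (M : Matrix (Fin n) (Fin n) ℝ) :
    l2Norm (U * M * star U) = l2Norm M := by
  simp only [l2Norm_eq]
  rw [mul_assoc, CStarRing.norm_mem_unitary_mul (M * star U) hU,
    CStarRing.norm_mul_mem_unitary M (Unitary.star_mem hU)]

lemma l2Norm_diagonal_le {n : ℕ} (v : Fin n → ℝ) (c : ℝ) (hc : 0 ≤ c) (h : ∀ i, |v i| ≤ c) :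
    l2Norm (Matrix.diagonal v) ≤ c := by
  rw [l2Norm_eq, Matrix.cstar_norm_def]
  refine ContinuousLinearMap.opNorm_le_bound _ hc fun x => ?_
  have hy : ∀ i, toEuclideanCLM (𝕜 := ℝ) (diagonal v) x i = v i * x i := by
    intro i
    show toLin' (diagonal v) x i = _
    simp [toLin'_apply, mulVec_diagonal]
  rw [EuclideanSpace.norm_eq, EuclideanSpace.norm_eq,
    ← Real.sqrt_sq hc, ← Real.sqrt_mul (by positivity)]
  apply Real.sqrt_le_sqrt
  rw [Finset.mul_sum]
  apply Finset.sum_le_sum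
  intro i _
  rw [hy i, Real.norm_eq_abs, Real.norm_eq_abs, abs_mul, mul_pow]
  exact mul_le_mul_of_nonneg_right (pow_le_pow_left₀ (abs_nonneg _) (h i) 2) (by positivity)

lemma abs_entry_le_l2Norm {n : ℕ} (M : Matrix (Fin n) (Fin n) ℝ) (i j : Fin n) :
    |M i j| ≤ l2Norm M := by
  have h1 : M i j = toEuclideanCLM (𝕜 := ℝ) M ((WithLp.equiv 2 _).symm (Pi.single j 1)) i := by
    show M i j = toLin' M (Pi.single j 1) i
    simp [toLin'_apply]
  rw [h1]
  calc |toEuclideanCLM (𝕜 := ℝ) M ((WithLp.equiv 2 _).symm (Pi.single j 1)) i|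
      ≤ ‖toEuclideanCLM (𝕜 := ℝ) M ((WithLp.equiv 2 _).symm (Pi.single j 1))‖ := by
        set y := toEuclideanCLM (𝕜 := ℝ) M ((WithLp.equiv 2 _).symm (Pi.single j 1))
        rw [EuclideanSpace.norm_eq, ← Real.sqrt_sq_eq_abs]
        apply Real.sqrt_le_sqrt
        have := Finset.single_le_sum (f := fun k => ‖y k‖ ^ 2)
          (fun k _ => by positivity) (Finset.mem_univ i)
        simpa [Real.norm_eq_abs, sq_abs] using this
    _ ≤ l2Norm M * ‖(WithLp.equiv 2 (Fin n → ℝ)).symm (Pi.single j 1)‖ :=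
        ContinuousLinearMap.le_opNorm _ _
    _ ≤ l2Norm M := by
        rw [show ((WithLp.equiv 2 (Fin n → ℝ)).symm (Pi.single j 1)) =
          EuclideanSpace.single j (1:ℝ) from rfl, EuclideanSpace.norm_single]
        simp

end Scoped

lemma exp_smul_eq {n : ℕ} {A : Matrix (Fin n) (Fin n) ℝ} (hA : A.IsHermitian) (s : ℝ) :
    NormedSpace.exp (s • A) = (hA.eigenvectorUnitary : Matrix (Fin n) (Fin n) ℝ) *
      Matrix.diagonal (fun i => Real.exp (s * hA.eigenvalues i)) *
      star (hA.eigenvectorUnitary : Matrix (Fin n) (Fin n) ℝ) := by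
  set U : Matrix (Fin n) (Fin n) ℝ := ↑(hA.eigenvectorUnitary)
  have hU : U ∈ unitary (Matrix (Fin n) (Fin n) ℝ) := (hA.eigenvectorUnitary).2
  have hUinv : U⁻¹ = star U := Matrix.inv_eq_left_inv (Unitary.star_mul_self_of_mem hU)
  have hdiag : (Matrix.diagonal (RCLike.ofReal ∘ hA.eigenvalues) : Matrix (Fin n) (Fin n) ℝ)
      = Matrix.diagonal hA.eigenvalues := by congr 1
  have hsA : s • A = U * Matrix.diagonal (fun i => s * hA.eigenvalues i) * U⁻¹ := by
    rw [hUinv]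
    conv_lhs => rw [hA.spectral_theorem, Unitary.conjStarAlgAut_apply, hdiag]
    rw [← smul_mul_assoc, ← mul_smul_comm, ← Matrix.diagonal_smul]
    congr 2
  rw [hsA, Matrix.exp_conj U _ ⟨Unitary.toUnits ⟨U, hU⟩, rfl⟩, Matrix.exp_diagonal, hUinv]
  congr 2
  rw [Pi.exp_def, ← Real.exp_eq_exp_ℝ]

/-- norm bound for `exp (s • A)` for symmetric `A`. -/
lemma l2Norm_exp_smul_le {n : ℕ} {A : Matrix (Fin n) (Fin n) ℝ} (hA : A.IsHermitian)
    (s c : ℝ) (h : ∀ i, s * hA.eigenvalues i ≤ c) :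
    l2Norm (NormedSpace.exp (s • A)) ≤ Real.exp c := by
  rw [exp_smul_eq hA s, l2Norm_conj_unitary (hA.eigenvectorUnitary).2]
  exact l2Norm_diagonal_le _ _ (Real.exp_pos c).le fun i => by
    rw [abs_of_pos (Real.exp_pos _)]
    exact Real.exp_le_exp.mpr (h i)

lemma exp_entry_continuous {n : ℕ} {A : Matrix (Fin n) (Fin n) ℝ} (hA : A.IsHermitian)
    (i j : Fin n) : Continuous (fun t : ℝ => NormedSpace.exp (-(t • A)) i j) := by
  have h : ∀ t : ℝ, NormedSpace.exp (-(t • A)) i j =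
      ∑ k, (hA.eigenvectorUnitary : Matrix (Fin n) (Fin n) ℝ) i k *
        Real.exp (-t * hA.eigenvalues k) *
        star (hA.eigenvectorUnitary : Matrix (Fin n) (Fin n) ℝ) k j := by
    intro t
    rw [← neg_smul, exp_smul_eq hA (-t), Matrix.mul_apply]
    congr 1
    funext k
    rw [Matrix.mul_diagonal]
  simp only [h]
  exact continuous_finset_sum _ fun k _ => by fun_prop

lemma triple_mul_apply {n : ℕ} (P M Q : Matrix (Fin n) (Fin n) ℝ) (i j : Fin n) :
    (P * M * Q) i j = ∑ k, ∑ l, P i k * M k l * Q l j := by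
  rw [Matrix.mul_apply]
  rw [Finset.sum_comm]
  congr 1
  funext l
  rw [Matrix.mul_apply, Finset.sum_mul]

end Helpers

/-- Two-sided bound on the truncation error `X - X(τ)` of the Lyapunov solution
`X = ∫_0^∞ e^{-tA} D e^{-tA} dt`, in the spectral norm:
`e^{-2τ λ_max} ‖X‖ ≤ l2Norm (X - Xτ) ≤ e^{-2τ λ_min} ‖X‖`. -/
theorem lyapunov_truncation_bounds {n : ℕ}
    (A D X Xτ : Matrix (Fin n) (Fin n) ℝ) (hA : A.PosDef) (hD : D.IsSymm)
    (τ : ℝ) (hτ : 0 < τ)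
    (hX : ∀ i j : Fin n, X i j =
      ∫ t in Set.Ioi (0 : ℝ),
        (NormedSpace.exp (-(t • A)) * D * NormedSpace.exp (-(t • A))) i j)
    (hXτ : ∀ i j : Fin n, Xτ i j =
      ∫ t in Set.Ioc (0 : ℝ) τ,
        (NormedSpace.exp (-(t • A)) * D * NormedSpace.exp (-(t • A))) i j) :
    Real.exp (-2 * τ * sSup (spectrum ℝ A)) * l2Norm X ≤ l2Norm (X - Xτ) ∧
    l2Norm (X - Xτ) ≤ Real.exp (-2 * τ * sInf (spectrum ℝ A)) * l2Norm X := by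
  rcases Nat.eq_zero_or_pos n with hn | hn
  · subst hn
    have h0 : ∀ M : Matrix (Fin 0) (Fin 0) ℝ, l2Norm M = 0 := by
      intro M
      rw [show M = 0 from Subsingleton.elim _ _, l2Norm, map_zero, norm_zero]
    constructor <;> rw [h0, h0] <;> simp
  -- notation
  have hH : A.IsHermitian := hA.1
  set μ := sInf (spectrum ℝ A) with hμdef
  set ν := sSup (spectrum ℝ A) with hνdef
  have hspec : spectrum ℝ A = Set.range hH.eigenvalues := hH.spectrum_real_eq_range_eigenvalues
  haveI : Nonempty (Fin n) := ⟨⟨0, hn⟩⟩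
  have hfin : (spectrum ℝ A).Finite := A.finite_real_spectrum
  have hne : (spectrum ℝ A).Nonempty := by
    rw [hspec]; exact Set.range_nonempty _
  have hμle : ∀ i, μ ≤ hH.eigenvalues i := fun i =>
    csInf_le hfin.bddBelow (hspec ▸ Set.mem_range_self i)
  have hleν : ∀ i, hH.eigenvalues i ≤ ν := fun i =>
    le_csSup hfin.bddAbove (hspec ▸ Set.mem_range_self i)
  have hμpos : 0 < μ := by
    have := hne.csInf_mem hfin
    rw [hspec] at this
    obtain ⟨i, hi⟩ := this
    rw [hμdef, hspec, ← hi]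
    exact hA.eigenvalues_pos i
  set F : ℝ → Matrix (Fin n) (Fin n) ℝ :=
    fun t => NormedSpace.exp (-(t • A)) * D * NormedSpace.exp (-(t • A)) with hF
  -- norm bound on exp(-(t•A))
  have hExp : ∀ t : ℝ, 0 ≤ t → l2Norm (NormedSpace.exp (-(t • A))) ≤ Real.exp (-(t * μ)) := by
    intro t ht
    rw [← neg_smul]
    exact l2Norm_exp_smul_le hH (-t) _ fun i => by
      rw [neg_mul, neg_le_neg_iff]
      exact mul_le_mul_of_nonneg_left (hμle i) ht
  -- continuity of entries
  have hFcont : ∀ i j, Continuous fun t => F t i j := by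
    intro i j
    have : ∀ t, F t i j = ∑ k, ∑ l, NormedSpace.exp (-(t • A)) i k * D k l *
        NormedSpace.exp (-(t • A)) l j := fun t => triple_mul_apply _ _ _ i j
    simp only [this]
    refine continuous_finset_sum _ fun k _ => continuous_finset_sum _ fun l _ => ?_
    exact ((exp_entry_continuous hH i k).mul continuous_const).mul (exp_entry_continuous hH l j)
  -- bound on entries
  have hFb : ∀ t : ℝ, 0 ≤ t → ∀ i j, |F t i j| ≤ Real.exp (-(2 * μ) * t) * l2Norm D := by
    intro t ht i j
    calc |F t i j| ≤ l2Norm (F t) := abs_entry_le_l2Norm _ i j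
      _ ≤ l2Norm (NormedSpace.exp (-(t • A)) * D) * l2Norm (NormedSpace.exp (-(t • A))) :=
          l2Norm_mul_le _ _
      _ ≤ (l2Norm (NormedSpace.exp (-(t • A))) * l2Norm D) *
            l2Norm (NormedSpace.exp (-(t • A))) := by
          apply mul_le_mul_of_nonneg_right (l2Norm_mul_le _ _) (l2Norm_nonneg _)
      _ ≤ (Real.exp (-(t * μ)) * l2Norm D) * Real.exp (-(t * μ)) := by
          apply mul_le_mul
          · exact mul_le_mul_of_nonneg_right (hExp t ht) (l2Norm_nonneg _)
          · exact hExp t ht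
          · exact l2Norm_nonneg _
          · exact mul_nonneg (Real.exp_pos _).le (l2Norm_nonneg _)
      _ = Real.exp (-(2 * μ) * t) * l2Norm D := by
          rw [mul_right_comm, ← Real.exp_add]
          ring_nf
  -- integrability of entries
  have hFint : ∀ i j, IntegrableOn (fun t => F t i j) (Set.Ioi (0:ℝ)) := by
    intro i j
    apply Integrable.mono' ((exp_neg_integrableOn_Ioi 0 (by linarith : (0:ℝ) < 2 * μ)).mul_const
      (l2Norm D))
    · exact (hFcont i j).aestronglyMeasurable
    · filter_upwards [ae_restrict_mem measurableSet_Ioi] with t ht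
      rw [Real.norm_eq_abs]
      exact hFb t (le_of_lt ht) i j
  -- splitting of the integral
  have hsplit : ∀ i j, (X - Xτ) i j = ∫ t in Set.Ioi τ, F t i j := by
    intro i j
    have hunion : Set.Ioc (0:ℝ) τ ∪ Set.Ioi τ = Set.Ioi 0 := Set.Ioc_union_Ioi_eq_Ioi hτ.le
    have h1 : IntegrableOn (fun t => F t i j) (Set.Ioc (0:ℝ) τ) :=
      (hFint i j).mono_set Set.Ioc_subset_Ioi_self
    have h2 : IntegrableOn (fun t => F t i j) (Set.Ioi τ) :=
      (hFint i j).mono_set (Set.Ioi_subset_Ioi hτ.le)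
    have := MeasureTheory.setIntegral_union (Set.Ioc_disjoint_Ioi le_rfl)
      measurableSet_Ioi h1 h2 (f := fun t => F t i j) (μ := volume)
    rw [hunion] at this
    rw [Matrix.sub_apply, hX i j, hXτ i j, hF]
    rw [this]
    ring
  -- change of variables
  have hshift : ∀ i j, (∫ t in Set.Ioi τ, F t i j) = ∫ s in Set.Ioi (0:ℝ), F (s + τ) i j := by
    intro i j
    have mp : MeasurePreserving (fun x : ℝ => x + τ) volume volume :=
      measurePreserving_add_right volume τ
    have emb : MeasurableEmbedding (fun x : ℝ => x + τ) :=
      (MeasurableEquiv.addRight τ).measurableEmbedding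
    have hpre : (fun x : ℝ => x + τ) ⁻¹' Set.Ioi τ = Set.Ioi 0 := by
      ext x
      simp [Set.mem_preimage, Set.mem_Ioi]
    rw [← mp.setIntegral_preimage_emb emb (fun t => F t i j) (Set.Ioi τ), hpre]
  -- the splitting identity
  set E : Matrix (Fin n) (Fin n) ℝ := NormedSpace.exp (-(τ • A)) with hE
  have hcomm : ∀ s : ℝ, Commute (-(s • A)) (-(τ • A)) :=
    fun s => (((Commute.refl A).smul_left s).smul_right τ).neg_left.neg_right
  have hexp_add : ∀ s : ℝ, NormedSpace.exp (-((s + τ) • A)) = E * NormedSpace.exp (-(s • A)) := by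
    intro s
    have h1 : -((s + τ) • A) = -(τ • A) + -(s • A) := by
      rw [add_smul]; abel
    rw [h1, Matrix.exp_add_of_commute _ _ (hcomm s).symm]
  have hexp_add' : ∀ s : ℝ, NormedSpace.exp (-((s + τ) • A))
      = NormedSpace.exp (-(s • A)) * E := by
    intro s
    have h1 : -((s + τ) • A) = -(s • A) + -(τ • A) := by
      rw [add_smul]; abel
    rw [h1, Matrix.exp_add_of_commute _ _ (hcomm s)]
  have hEsE : ∀ s : ℝ, E * NormedSpace.exp (-(s • A)) = NormedSpace.exp (-(s • A)) * E :=
    fun s => (hexp_add s).symm.trans (hexp_add' s)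
  have hFshift : ∀ s : ℝ, F (s + τ) = E * F s * E := by
    intro s
    rw [hF]
    simp only
    rw [hexp_add s]
    nth_rewrite 2 [hEsE s]
    simp only [mul_assoc]
  have hsplitting : X - Xτ = E * X * E := by
    ext i j
    rw [hsplit i j, hshift i j]
    simp only [hFshift]
    have hentry : ∀ s, (E * F s * E) i j = ∑ k, ∑ l, E i k * F s k l * E l j :=
      fun s => triple_mul_apply _ _ _ i j
    simp only [hentry]
    rw [MeasureTheory.integral_finset_sum]
    · rw [triple_mul_apply]
      congr 1
      funext k
      rw [MeasureTheory.integral_finset_sum]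
      · congr 1
        funext l
        have : ∀ s : ℝ, E i k * F s k l * E l j = (E i k * E l j) * F s k l := fun s => by ring
        simp only [this]
        rw [MeasureTheory.integral_const_mul]
        rw [← hX k l]
        ring
      · intro l _
        have : (fun s : ℝ => E i k * F s k l * E l j)
            = fun s => (E i k * E l j) * F s k l := by funext s; ring
        rw [this]
        exact (hFint k l).const_mul _
    · intro k _
      apply MeasureTheory.integrable_finset_sum
      intro l _
      have : (fun s : ℝ => E i k * F s k l * E l j)
          = fun s => (E i k * E l j) * F s k l := by funext s; ring
      rw [this]
      exact (hFint k l).const_mul _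
  -- norm bound for E
  have hEnorm : l2Norm E ≤ Real.exp (-(τ * μ)) := hExp τ hτ.le
  -- upper bound
  have upper : l2Norm (X - Xτ) ≤ Real.exp (-2 * τ * μ) * l2Norm X := by
    rw [hsplitting]
    calc l2Norm (E * X * E) ≤ l2Norm (E * X) * l2Norm E := l2Norm_mul_le _ _
      _ ≤ (l2Norm E * l2Norm X) * l2Norm E :=
          mul_le_mul_of_nonneg_right (l2Norm_mul_le _ _) (l2Norm_nonneg _)
      _ ≤ (Real.exp (-(τ * μ)) * l2Norm X) * Real.exp (-(τ * μ)) := by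
          apply mul_le_mul
          · exact mul_le_mul_of_nonneg_right hEnorm (l2Norm_nonneg _)
          · exact hEnorm
          · exact l2Norm_nonneg _
          · exact mul_nonneg (Real.exp_pos _).le (l2Norm_nonneg _)
      _ = Real.exp (-2 * τ * μ) * l2Norm X := by
          rw [mul_right_comm, ← Real.exp_add]
          ring_nf
  -- lower bound
  set E' : Matrix (Fin n) (Fin n) ℝ := NormedSpace.exp (τ • A) with hE'
  have hE'norm : l2Norm E' ≤ Real.exp (τ * ν) :=
    l2Norm_exp_smul_le hH τ _ fun i => mul_le_mul_of_nonneg_left (hleν i) hτ.le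
  have hinv : E' * E = 1 := by
    rw [hE, hE', ← Matrix.exp_add_of_commute _ _ (Commute.neg_right (Commute.refl (τ • A)))]
    simp [NormedSpace.exp_zero]
  have hinv' : E * E' = 1 := by
    rw [hE, hE', ← Matrix.exp_add_of_commute _ _ (Commute.neg_left (Commute.refl (τ • A)))]
    simp [NormedSpace.exp_zero]
  have hXeq : X = E' * (X - Xτ) * E' := by
    rw [hsplitting]
    calc X = (E' * E) * X * (E * E') := by rw [hinv, hinv']; simp
      _ = E' * (E * X * E) * E' := by noncomm_ring
  have lower : Real.exp (-2 * τ * ν) * l2Norm X ≤ l2Norm (X - Xτ) := by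
    have hXle : l2Norm X ≤ Real.exp (2 * τ * ν) * l2Norm (X - Xτ) := by
      conv_lhs => rw [hXeq]
      calc l2Norm (E' * (X - Xτ) * E') ≤ l2Norm (E' * (X - Xτ)) * l2Norm E' := l2Norm_mul_le _ _
        _ ≤ (l2Norm E' * l2Norm (X - Xτ)) * l2Norm E' :=
            mul_le_mul_of_nonneg_right (l2Norm_mul_le _ _) (l2Norm_nonneg _)
        _ ≤ (Real.exp (τ * ν) * l2Norm (X - Xτ)) * Real.exp (τ * ν) := by
            apply mul_le_mul
            · exact mul_le_mul_of_nonneg_right hE'norm (l2Norm_nonneg _)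
            · exact hE'norm
            · exact l2Norm_nonneg _
            · exact mul_nonneg (Real.exp_pos _).le (l2Norm_nonneg _)
        _ = Real.exp (2 * τ * ν) * l2Norm (X - Xτ) := by
            rw [mul_right_comm, ← Real.exp_add]
            ring_nf
    calc Real.exp (-2 * τ * ν) * l2Norm X
        ≤ Real.exp (-2 * τ * ν) * (Real.exp (2 * τ * ν) * l2Norm (X - Xτ)) :=
          mul_le_mul_of_nonneg_left hXle (Real.exp_pos _).le
      _ = l2Norm (X - Xτ) := by
          rw [← mul_assoc, ← Real.exp_add]
          norm_num
  exact ⟨lower, upper⟩
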